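/- Let H, V be Hilbert spaces with V compactly embedded in H, and let ρⁿ : [0,T] → V be uniformly bounded in V, uniformly 1/2-Hölder continuous in H, and such that for each fixed time-average ρⁿ converges weakly in V to ρ; then ρⁿ(t) → ρ(t) strongly in H for every t ∈ (0,T). -/

import Mathlib

open MeasureTheory Filter

/-- A compact operator maps bounded weakly convergent sequences to strongly
convergent sequences. -/
private lemma compact_weak_to_strong
    {V H : Type*} [NormedAddCommGroup V] [InnerProductSpace ℝ V] [CompleteSpace V]
    [NormedAddCommGroup H] [InnerProductSpace ℝ H] [CompleteSpace H]
    (ι : V →L[ℝ] H) (hι : IsCompactOperator ι) (x : ℕ → V) (x₀ : V) (M : ℝ)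
    (hb : ∀ n, ‖x n‖ ≤ M)
    (hw : ∀ w : V, Tendsto (fun n => inner (𝕜 := ℝ) w (x n)) atTop
      (nhds (inner (𝕜 := ℝ) w x₀))) :
    Tendsto (fun n => ι (x n)) atTop (nhds (ι x₀)) := by
  have hK : IsCompact (closure (ι '' Metric.closedBall 0 M)) :=
    hι.isCompact_closure_image_closedBall M
  apply tendsto_of_subseq_tendsto
  intro ns hns
  have hmem : ∀ k, ι (x (ns k)) ∈ closure (ι '' Metric.closedBall 0 M) := fun k =>
    subset_closure ⟨x (ns k), by
      simpa [Metric.mem_closedBall, dist_zero_right] using hb (ns k), rfl⟩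
  obtain ⟨y, -, φ, hφ, hy⟩ := hK.tendsto_subseq hmem
  have hyx : y = ι x₀ := by
    refine (ext_inner_left ℝ fun z => ?_)
    have h1 : Tendsto (fun k => inner (𝕜 := ℝ) z (ι (x (ns (φ k))))) atTop
        (nhds (inner (𝕜 := ℝ) z y)) :=
      Filter.Tendsto.inner tendsto_const_nhds hy
    have h2 : Tendsto (fun k => inner (𝕜 := ℝ) z (ι (x (ns (φ k))))) atTop
        (nhds (inner (𝕜 := ℝ) z (ι x₀))) := by
      have h3 := (hw ((ContinuousLinearMap.adjoint ι) z)).comp (hns.comp hφ.tendsto_atTop)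
      simpa [ContinuousLinearMap.adjoint_inner_left, Function.comp_def] using h3
    exact tendsto_nhds_unique h1 h2
  exact ⟨φ, hyx ▸ hy⟩

/-- The average of `f` over `(t-h, t]` is `B`-close to `f t` under `ι` if each value is. -/
private lemma avg_close
    {V H : Type*} [NormedAddCommGroup V] [NormedSpace ℝ V] [CompleteSpace V]
    [NormedAddCommGroup H] [NormedSpace ℝ H] [CompleteSpace H]
    (ι : V →L[ℝ] H) {f : ℝ → V} {t h B : ℝ} (hh0 : 0 < h)
    (hint : IntegrableOn f (Set.Ioc (t - h) t))
    (hB : ∀ s ∈ Set.Ioc (t - h) t, ‖ι (f t) - ι (f s)‖ ≤ B) :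
    ‖ι (f t) - ι (h⁻¹ • ∫ s in Set.Ioc (t - h) t, f s)‖ ≤ B := by
  have hμ : (volume (Set.Ioc (t - h) t)).toReal = h := by
    rw [Real.volume_Ioc, ENNReal.toReal_ofReal (by linarith)]; ring
  have hμlt : volume (Set.Ioc (t - h) t) < ⊤ := by
    rw [Real.volume_Ioc]; exact ENNReal.ofReal_lt_top
  have hι_int : IntegrableOn (fun s => ι (f s)) (Set.Ioc (t - h) t) := ι.integrable_comp hint
  have e1 : ι (h⁻¹ • ∫ s in Set.Ioc (t - h) t, f s)
      = h⁻¹ • ∫ s in Set.Ioc (t - h) t, ι (f s) := by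
    rw [_root_.map_smul, ι.integral_comp_comm hint]
  have e2 : ι (f t) = h⁻¹ • ∫ _ in Set.Ioc (t - h) t, ι (f t) := by
    rw [setIntegral_const, measureReal_def, hμ, smul_smul, inv_mul_cancel₀ hh0.ne', one_smul]
  rw [e1]
  conv_lhs => rw [e2]
  rw [← smul_sub,
    ← integral_sub (integrableOn_const hμlt.ne :
      Integrable (fun _ => ι (f t)) (volume.restrict (Set.Ioc (t - h) t))) hι_int,
    norm_smul, Real.norm_eq_abs, abs_of_pos (inv_pos.2 hh0)]
  have hbound : ‖∫ s in Set.Ioc (t - h) t, (ι (f t) - ι (f s))‖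
      ≤ ∫ _ in Set.Ioc (t - h) t, B := by
    apply norm_integral_le_of_norm_le (integrableOn_const hμlt.ne)
    exact (ae_restrict_iff' measurableSet_Ioc).2 (Eventually.of_forall hB)
  rw [setIntegral_const, measureReal_def, hμ, smul_eq_mul] at hbound
  calc h⁻¹ * ‖∫ s in Set.Ioc (t - h) t, (ι (f t) - ι (f s))‖
      ≤ h⁻¹ * (h * B) := mul_le_mul_of_nonneg_left hbound (inv_pos.2 hh0).le
    _ = B := by field_simp

/-- Abstract core of Lemma 5.1: `V` compactly embedded in `H` via `ι`, `ρⁿ` uniformly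
bounded in `V`, uniformly 1/2-Hölder in `H`, whose time averages converge weakly in `V`
to those of `ρ`; then `ρⁿ(t) → ρ(t)` strongly in `H` for each `t ∈ (0,T)`. -/
theorem strong_H_convergence_from_averages
    {V H : Type*} [NormedAddCommGroup V] [InnerProductSpace ℝ V] [CompleteSpace V]
    [NormedAddCommGroup H] [InnerProductSpace ℝ H] [CompleteSpace H]
    (ι : V →L[ℝ] H) (hι : IsCompactOperator ι)
    (T : ℝ) (hT : 0 < T) (ρn : ℕ → ℝ → V) (ρ : ℝ → V)
    (M : ℝ) (hbdd : ∀ n, ∀ t ∈ Set.Ioo (0:ℝ) T, ‖ρn n t‖ ≤ M)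
    (hintn : ∀ n, IntegrableOn (ρn n) (Set.Ioo 0 T))
    (hintρ : IntegrableOn ρ (Set.Ioo 0 T))
    (C : ℝ)
    (hHolder : ∀ n, ∀ s ∈ Set.Ioo (0:ℝ) T, ∀ t ∈ Set.Ioo (0:ℝ) T,
      ‖ι (ρn n t) - ι (ρn n s)‖ ≤ C * Real.sqrt |t - s|)
    (hHolderρ : ∀ s ∈ Set.Ioo (0:ℝ) T, ∀ t ∈ Set.Ioo (0:ℝ) T,
      ‖ι (ρ t) - ι (ρ s)‖ ≤ C * Real.sqrt |t - s|)
    (havg : ∀ t ∈ Set.Ioo (0:ℝ) T, ∀ h : ℝ, 0 < h → h < t → ∀ w : V,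
      Tendsto (fun n => inner (𝕜 := ℝ) w (h⁻¹ • ∫ s in Set.Ioc (t - h) t, ρn n s))
        atTop (nhds (inner (𝕜 := ℝ) w (h⁻¹ • ∫ s in Set.Ioc (t - h) t, ρ s)))) :
    ∀ t ∈ Set.Ioo (0:ℝ) T,
      Tendsto (fun n => ι (ρn n t)) atTop (nhds (ι (ρ t))) := by
  intro t ht
  obtain ⟨ht0, htT⟩ := ht
  set C' : ℝ := max C 1 with hC'def
  have hC'pos : (0:ℝ) < C' := lt_of_lt_of_le one_pos (le_max_right _ _)
  have hC'C : C ≤ C' := le_max_left _ _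
  rw [Metric.tendsto_atTop]
  intro ε hε
  set h : ℝ := min (t / 2) ((ε / (4 * C')) ^ 2) with hhdef
  have hh0 : 0 < h := lt_min (by linarith) (by positivity)
  have hht : h < t := lt_of_le_of_lt (min_le_left _ _) (by linarith)
  have hsub : Set.Ioc (t - h) t ⊆ Set.Ioo 0 T := fun s hs =>
    ⟨by linarith [hs.1], lt_of_le_of_lt hs.2 htT⟩
  -- the key Hölder bound on the averages
  have hsqrt : C' * Real.sqrt h ≤ ε / 4 := by
    have h1 : Real.sqrt h ≤ ε / (4 * C') := by
      have : h ≤ (ε / (4 * C')) ^ 2 := min_le_right _ _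
      calc Real.sqrt h ≤ Real.sqrt ((ε / (4 * C')) ^ 2) := Real.sqrt_le_sqrt this
        _ = ε / (4 * C') := Real.sqrt_sq (by positivity)
    calc C' * Real.sqrt h ≤ C' * (ε / (4 * C')) :=
          mul_le_mul_of_nonneg_left h1 hC'pos.le
      _ = ε / 4 := by field_simp
  have hptbound : ∀ g : ℝ → V,
      (∀ s ∈ Set.Ioo (0:ℝ) T, ‖ι (g t) - ι (g s)‖ ≤ C * Real.sqrt |t - s|) →
      ∀ s ∈ Set.Ioc (t - h) t, ‖ι (g t) - ι (g s)‖ ≤ C' * Real.sqrt h := by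
    intro g hg s hs
    have hsT := hsub hs
    have habs : |t - s| ≤ h := by
      rw [abs_of_nonneg (by linarith [hs.2])]; linarith [hs.1]
    calc ‖ι (g t) - ι (g s)‖ ≤ C * Real.sqrt |t - s| := hg s hsT
      _ ≤ C' * Real.sqrt |t - s| :=
          mul_le_mul_of_nonneg_right hC'C (Real.sqrt_nonneg _)
      _ ≤ C' * Real.sqrt h :=
          mul_le_mul_of_nonneg_left (Real.sqrt_le_sqrt habs) hC'pos.le
  have hAn_close : ∀ n,
      ‖ι (ρn n t) - ι (h⁻¹ • ∫ s in Set.Ioc (t - h) t, ρn n s)‖ ≤ C' * Real.sqrt h :=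
    fun n => avg_close ι hh0 ((hintn n).mono_set hsub)
      (fun s hs => hptbound (ρn n) (fun s' hs' => hHolder n s' hs' t ⟨ht0, htT⟩) s hs)
  have hA_close :
      ‖ι (ρ t) - ι (h⁻¹ • ∫ s in Set.Ioc (t - h) t, ρ s)‖ ≤ C' * Real.sqrt h :=
    avg_close ι hh0 (hintρ.mono_set hsub)
      (fun s hs => hptbound ρ (fun s' hs' => hHolderρ s' hs' t ⟨ht0, htT⟩) s hs)
  -- uniform bound on the averages
  have hμ : (volume (Set.Ioc (t - h) t)).toReal = h := by
    rw [Real.volume_Ioc, ENNReal.toReal_ofReal (by linarith)]; ring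
  have hμlt : volume (Set.Ioc (t - h) t) < ⊤ := by
    rw [Real.volume_Ioc]; exact ENNReal.ofReal_lt_top
  have hAn_bdd : ∀ n, ‖h⁻¹ • ∫ s in Set.Ioc (t - h) t, ρn n s‖ ≤ max M 0 := by
    intro n
    rw [norm_smul, Real.norm_eq_abs, abs_of_pos (inv_pos.2 hh0)]
    have hb : ‖∫ s in Set.Ioc (t - h) t, ρn n s‖ ≤ ∫ _ in Set.Ioc (t - h) t, max M 0 := by
      apply norm_integral_le_of_norm_le (integrableOn_const hμlt.ne)
      refine (ae_restrict_iff' measurableSet_Ioc).2 (Eventually.of_forall fun s hs => ?_)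
      exact le_trans (hbdd n s (hsub hs)) (le_max_left _ _)
    rw [setIntegral_const, measureReal_def, hμ, smul_eq_mul] at hb
    calc h⁻¹ * ‖∫ s in Set.Ioc (t - h) t, ρn n s‖ ≤ h⁻¹ * (h * max M 0) :=
          mul_le_mul_of_nonneg_left hb (inv_pos.2 hh0).le
      _ = max M 0 := by field_simp
  -- strong H-convergence of the averages by compactness
  have hstrong : Tendsto (fun n => ι (h⁻¹ • ∫ s in Set.Ioc (t - h) t, ρn n s)) atTop
      (nhds (ι (h⁻¹ • ∫ s in Set.Ioc (t - h) t, ρ s))) :=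
    compact_weak_to_strong ι hι _ _ (max M 0) hAn_bdd
      (havg t ⟨ht0, htT⟩ h hh0 hht)
  rw [Metric.tendsto_atTop] at hstrong
  obtain ⟨N, hN⟩ := hstrong (ε / 2) (by linarith)
  refine ⟨N, fun n hn => ?_⟩
  have hmid := hN n hn
  rw [dist_eq_norm] at hmid ⊢
  have t1 := norm_sub_le_norm_sub_add_norm_sub (ι (ρn n t))
    (ι (h⁻¹ • ∫ s in Set.Ioc (t - h) t, ρn n s)) (ι (ρ t))
  have t2 := norm_sub_le_norm_sub_add_norm_sub
    (ι (h⁻¹ • ∫ s in Set.Ioc (t - h) t, ρn n s))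
    (ι (h⁻¹ • ∫ s in Set.Ioc (t - h) t, ρ s)) (ι (ρ t))
  have h3 : ‖ι (h⁻¹ • ∫ s in Set.Ioc (t - h) t, ρ s) - ι (ρ t)‖ ≤ C' * Real.sqrt h := by
    rw [norm_sub_rev]; exact hA_close
  have h1 := le_trans (hAn_close n) hsqrt
  have h3' := le_trans h3 hsqrt
  linarith
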